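/- For the network without hidden layer with W = { w ∈ ℝ^d : ‖w‖₂ ≤ B₁ } and inputs satisfying ‖x‖₂ ≤ B₂, the dropout Rademacher complexity of dropout of both units and weights satisfies 𝔑_n(F_W^{(III)}) ≤ B₁B₂ρ/√n, where F_W^{(III)} = { (x,(r₁,r₂)) ↦ ⟨w⊙r₁, x⊙r₂⟩ : w ∈ W } and r₁, r₂ ∈ {0,1}^d have all entries i.i.d. Bern(ρ). -/
import Mathlib


open MeasureTheory Finset

noncomputable section

/-- `0/1` dropout mask as a real number. -/
def mask (b : Bool) : ℝ := if b then 1 else 0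

/-- Rademacher sign `±1`. -/
def sgn (b : Bool) : ℝ := if b then 1 else -1

/-- Probability of a single `Bern(ρ)` coordinate. -/
def bw (ρ : ℝ) (b : Bool) : ℝ := if b then ρ else 1 - ρ

/-- Empirical dropout Rademacher complexity of a class of functions on
`X × R` indexed by weights `w ∈ WS`, on sample `xs` and dropout variables `rs`.
The expectation over the i.i.d. uniform signs is the average over all `2ⁿ`
sign patterns. -/
def empRadW {Wt X R : Type*} (n : ℕ) (WS : Set Wt)
    (F : Wt → X → R → ℝ) (xs : Fin n → X) (rs : Fin n → R) : ℝ :=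
  (∑ ε : Fin n → Bool,
      sSup {v : ℝ | ∃ w ∈ WS,
        v = (1 / (n : ℝ)) * ∑ i, sgn (ε i) * F w (xs i) (rs i)}) / 2 ^ n

/-- The (expected) dropout Rademacher complexity `𝔑ₙ`: the expectation, over the
i.i.d. sample `xs ~ DXⁿ` and the i.i.d. dropout variables `rs` (each distributed
according to the finite Bernoulli-product law with weights `wt`), of the empirical
dropout Rademacher complexity. -/
def radC {Wt R : Type*} [Fintype R] (n d : ℕ) (DX : Measure (Fin d → ℝ))
    (WS : Set Wt) (wt : R → ℝ) (F : Wt → (Fin d → ℝ) → R → ℝ) : ℝ :=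
  ∫ xs : Fin n → Fin d → ℝ,
      ∑ rs : Fin n → R, (∏ i, wt (rs i)) * empRadW n WS F xs rs
    ∂(Measure.pi fun _ => DX)

/-- Weight class of the no-hidden-layer network: the `ℓ₂` ball of radius `B₁`. -/
def linW (d : ℕ) (B₁ : ℝ) : Set (Fin d → ℝ) :=
  {w | Real.sqrt (∑ j, w j ^ 2) ≤ B₁}

/-- Type (I) dropout (dropout of units) output of the no-hidden-layer network:
`(x, r) ↦ ⟨w, x⊙r⟩`. -/
def linFI (d : ℕ) : (Fin d → ℝ) → (Fin d → ℝ) → (Fin d → Bool) → ℝ :=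
  fun w x r => ∑ j, w j * (x j * mask (r j))

/-- Type (II) dropout (dropout of weights) output of the no-hidden-layer network:
`(x, r) ↦ ⟨w⊙r, x⟩`. -/
def linFII (d : ℕ) : (Fin d → ℝ) → (Fin d → ℝ) → (Fin d → Bool) → ℝ :=
  fun w x r => ∑ j, (w j * mask (r j)) * x j

/-- Type (III) dropout (dropout of both weights and units) output of the
no-hidden-layer network: `(x, (r₁, r₂)) ↦ ⟨w⊙r₁, x⊙r₂⟩`. -/
def linFIII (d : ℕ) :
    (Fin d → ℝ) → (Fin d → ℝ) → (Fin d → Bool) × (Fin d → Bool) → ℝ :=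
  fun w x r => ∑ j, (w j * mask (r.1 j)) * (x j * mask (r.2 j))

/-- Bernoulli product weight of a dropout vector `r ∈ {0,1}^d`. -/
def wtVec (d : ℕ) (ρ : ℝ) (r : Fin d → Bool) : ℝ := ∏ j, bw ρ (r j)

/-- Bernoulli product weight of a pair of dropout vectors. -/
def wtPair (d : ℕ) (ρ : ℝ) (r : (Fin d → Bool) × (Fin d → Bool)) : ℝ :=
  (∏ j, bw ρ (r.1 j)) * ∏ j, bw ρ (r.2 j)

end


section AuxLemmas

lemma sgn_mul_self (b : Bool) : sgn b * sgn b = 1 := by cases b <;> simp [sgn]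

lemma sgn_not (b : Bool) : sgn (!b) = - sgn b := by cases b <;> simp [sgn]

/-- Orthogonality of distinct Rademacher coordinates. -/
lemma sum_sgn_orth {n : ℕ} {i k : Fin n} (h : i ≠ k) :
    ∑ ε : Fin n → Bool, sgn (ε i) * sgn (ε k) = 0 := by
  classical
  apply Finset.sum_ninvolution (g := fun ε => Function.update ε i (!ε i))
  · intro ε
    have h1 : Function.update ε i (!ε i) i = !ε i := by simp
    have h2 : Function.update ε i (!ε i) k = ε k := Function.update_of_ne (Ne.symm h) _ _
    rw [h1, h2, sgn_not]; ring
  · intro ε _ hEq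
    have := congrFun hEq i
    simp at this
  · intro ε; exact Finset.mem_univ _
  · intro ε
    funext j
    by_cases hj : j = i
    · subst hj; simp
    · simp [Function.update_of_ne hj]

lemma card_eps (n : ℕ) : (Finset.univ : Finset (Fin n → Bool)).card = 2 ^ n := by
  simp [Finset.card_univ]

/-- Second moment of a Rademacher average. -/
lemma sq_sum_sgn {n : ℕ} (a : Fin n → ℝ) :
    ∑ ε : Fin n → Bool, (∑ i, sgn (ε i) * a i) ^ 2 = 2 ^ n * ∑ i, a i ^ 2 := by
  classical
  have expand : ∀ ε : Fin n → Bool,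
      (∑ i, sgn (ε i) * a i) ^ 2 = ∑ i, ∑ k, (sgn (ε i) * sgn (ε k)) * (a i * a k) := by
    intro ε
    rw [sq, Finset.sum_mul_sum]
    exact Finset.sum_congr rfl fun i _ => Finset.sum_congr rfl fun k _ => by ring
  rw [Finset.sum_congr rfl fun ε _ => expand ε]
  rw [Finset.sum_comm]
  have inner : ∀ i : Fin n,
      (∑ ε : Fin n → Bool, ∑ k, (sgn (ε i) * sgn (ε k)) * (a i * a k)) = 2 ^ n * a i ^ 2 := by
    intro i
    rw [Finset.sum_comm]
    have hterm : ∀ k : Fin n,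
        (∑ ε : Fin n → Bool, (sgn (ε i) * sgn (ε k)) * (a i * a k))
          = (∑ ε : Fin n → Bool, sgn (ε i) * sgn (ε k)) * (a i * a k) := by
      intro k; rw [Finset.sum_mul]
    rw [Finset.sum_congr rfl fun k _ => hterm k]
    rw [Finset.sum_eq_single_of_mem i (Finset.mem_univ i)]
    · have : (∑ ε : Fin n → Bool, sgn (ε i) * sgn (ε i)) = (2 : ℝ) ^ n := by
        rw [Finset.sum_congr rfl fun ε _ => sgn_mul_self (ε i)]
        simp [card_eps]
      rw [this]; ring
    · intro k _ hk
      rw [sum_sgn_orth (Ne.symm hk)]; ring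
  rw [Finset.sum_congr rfl fun i _ => inner i, ← Finset.mul_sum]

/-- Marginalization of a product weight against a single-coordinate observable. -/
lemma marginal {ι R : Type*} [Fintype ι] [DecidableEq ι] [Fintype R]
    (w g : R → ℝ) (i₀ : ι) (hw : ∑ r, w r = 1) :
    ∑ rs : ι → R, (∏ i, w (rs i)) * g (rs i₀) = ∑ r, w r * g r := by
  classical
  have key : ∀ rs : ι → R,
      (∏ i, w (rs i)) * g (rs i₀) = ∏ i, (w (rs i) * if i = i₀ then g (rs i) else 1) := by
    intro rs
    rw [Finset.prod_mul_distrib]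
    congr 1
    rw [Finset.prod_ite_eq' Finset.univ i₀ (fun i => g (rs i))]
    simp
  rw [Finset.sum_congr rfl fun rs _ => key rs]
  rw [← Fintype.prod_sum (fun i r => w r * if i = i₀ then g r else 1)]
  have : ∀ i : ι, (∑ r, w r * if i = i₀ then g r else 1) = if i = i₀ then ∑ r, w r * g r else 1 := by
    intro i
    by_cases hi : i = i₀ <;> simp [hi, hw]
  rw [Finset.prod_congr rfl fun i _ => this i]
  rw [Finset.prod_ite_eq' Finset.univ i₀ (fun _ => ∑ r, w r * g r)]
  simp

lemma bw_nonneg {ρ : ℝ} (h0 : 0 ≤ ρ) (h1 : ρ ≤ 1) (b : Bool) : 0 ≤ bw ρ b := by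
  cases b <;> simp [bw] <;> linarith

lemma sum_bw {ρ : ℝ} : ∑ b : Bool, bw ρ b = 1 := by simp [bw]

lemma wtPair_nonneg {d : ℕ} {ρ : ℝ} (h0 : 0 ≤ ρ) (h1 : ρ ≤ 1)
    (r : (Fin d → Bool) × (Fin d → Bool)) : 0 ≤ wtPair d ρ r :=
  mul_nonneg (Finset.prod_nonneg fun j _ => bw_nonneg h0 h1 _)
    (Finset.prod_nonneg fun j _ => bw_nonneg h0 h1 _)

lemma sum_wtVec {d : ℕ} {ρ : ℝ} : ∑ r : Fin d → Bool, ∏ j, bw ρ (r j) = 1 := by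
  rw [← Fintype.prod_sum (fun (_ : Fin d) (b : Bool) => bw ρ b)]
  have h : bw ρ true + bw ρ false = 1 := by simp [bw]
  simp [h]

lemma sum_wtPair {d : ℕ} {ρ : ℝ} :
    ∑ r : (Fin d → Bool) × (Fin d → Bool), wtPair d ρ r = 1 := by
  rw [Fintype.sum_prod_type]
  unfold wtPair
  simp only [← Finset.sum_mul, ← Finset.mul_sum]
  rw [sum_wtVec]
  norm_num

lemma moment_mask {d : ℕ} {ρ : ℝ} (j : Fin d) :
    ∑ r : Fin d → Bool, (∏ jj, bw ρ (r jj)) * mask (r j) ^ 2 = ρ := by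
  rw [marginal (bw ρ) (fun b => mask b ^ 2) j sum_bw]
  simp [bw, mask]

lemma moment_pair {d : ℕ} {ρ : ℝ} (j : Fin d) :
    ∑ r : (Fin d → Bool) × (Fin d → Bool),
      wtPair d ρ r * (mask (r.1 j) * mask (r.2 j)) ^ 2 = ρ ^ 2 := by
  rw [Fintype.sum_prod_type]
  have : ∀ a b : Fin d → Bool,
      wtPair d ρ (a, b) * (mask ((a, b).1 j) * mask ((a, b).2 j)) ^ 2
        = ((∏ jj, bw ρ (a jj)) * mask (a j) ^ 2) * ((∏ jj, bw ρ (b jj)) * mask (b j) ^ 2) := by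
    intro a b; unfold wtPair; ring
  rw [Finset.sum_congr rfl fun a _ => Finset.sum_congr rfl fun b _ => this a b]
  simp only [← Finset.sum_mul, ← Finset.mul_sum]
  rw [moment_mask]
  ring

lemma empRad_bound (d n : ℕ) (hn : 0 < n) (B₁ : ℝ) (hB₁ : 0 ≤ B₁)
    (xs : Fin n → Fin d → ℝ) (rs : Fin n → (Fin d → Bool) × (Fin d → Bool)) :
    empRadW n (linW d B₁) (linFIII d) xs rs
      ≤ (B₁ / n) * Real.sqrt
          (∑ i, ∑ j, (xs i j * mask ((rs i).1 j) * mask ((rs i).2 j)) ^ 2) := by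
  classical
  set v : Fin n → Fin d → ℝ :=
    fun i j => xs i j * mask ((rs i).1 j) * mask ((rs i).2 j) with hv
  set S : ℝ := ∑ i, ∑ j, v i j ^ 2 with hS
  have hS0 : 0 ≤ S := Finset.sum_nonneg fun i _ =>
    Finset.sum_nonneg fun j _ => sq_nonneg _
  have hn' : (0 : ℝ) < n := by exact_mod_cast hn
  have hsup : ∀ ε : Fin n → Bool,
      sSup {val : ℝ | ∃ w ∈ linW d B₁,
        val = (1 / (n : ℝ)) * ∑ i, sgn (ε i) * linFIII d w (xs i) (rs i)}
      ≤ (B₁ / n) * Real.sqrt (∑ j, (∑ i, sgn (ε i) * v i j) ^ 2) := by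
    intro ε
    apply Real.sSup_le
    · rintro val ⟨w, hw, rfl⟩
      have hrw : (∑ i, sgn (ε i) * linFIII d w (xs i) (rs i))
          = ∑ j, w j * (∑ i, sgn (ε i) * v i j) := by
        unfold linFIII
        calc (∑ i, sgn (ε i) * ∑ j, (w j * mask ((rs i).1 j)) * (xs i j * mask ((rs i).2 j)))
            = ∑ i, ∑ j, sgn (ε i) * ((w j * mask ((rs i).1 j)) * (xs i j * mask ((rs i).2 j))) :=
              Finset.sum_congr rfl fun i _ => Finset.mul_sum _ _ _
          _ = ∑ j, ∑ i, sgn (ε i) * ((w j * mask ((rs i).1 j)) * (xs i j * mask ((rs i).2 j))) :=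
              Finset.sum_comm
          _ = ∑ j, w j * (∑ i, sgn (ε i) * v i j) := by
              refine Finset.sum_congr rfl fun j _ => ?_
              rw [Finset.mul_sum]
              refine Finset.sum_congr rfl fun i _ => by simp only [hv]; ring
      rw [hrw]
      have hcs := Real.sum_mul_le_sqrt_mul_sqrt Finset.univ w
        (fun j => ∑ i, sgn (ε i) * v i j)
      have hw' : Real.sqrt (∑ j, w j ^ 2) ≤ B₁ := hw
      have h2 : (∑ j, w j * (∑ i, sgn (ε i) * v i j))
          ≤ B₁ * Real.sqrt (∑ j, (∑ i, sgn (ε i) * v i j) ^ 2) :=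
        hcs.trans (mul_le_mul_of_nonneg_right hw' (Real.sqrt_nonneg _))
      calc (1 / (n : ℝ)) * ∑ j, w j * (∑ i, sgn (ε i) * v i j)
          ≤ (1 / (n : ℝ)) * (B₁ * Real.sqrt (∑ j, (∑ i, sgn (ε i) * v i j) ^ 2)) := by
            apply mul_le_mul_of_nonneg_left h2; positivity
        _ = (B₁ / n) * Real.sqrt (∑ j, (∑ i, sgn (ε i) * v i j) ^ 2) := by ring
    · positivity
  have hsum : (∑ ε : Fin n → Bool,
      sSup {val : ℝ | ∃ w ∈ linW d B₁,
        val = (1 / (n : ℝ)) * ∑ i, sgn (ε i) * linFIII d w (xs i) (rs i)})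
      ≤ (B₁ / n) * (2 ^ n * Real.sqrt S) := by
    calc (∑ ε : Fin n → Bool, sSup _)
        ≤ ∑ ε : Fin n → Bool,
            (B₁ / n) * Real.sqrt (∑ j, (∑ i, sgn (ε i) * v i j) ^ 2) :=
          Finset.sum_le_sum fun ε _ => hsup ε
      _ = (B₁ / n) * ∑ ε : Fin n → Bool,
            Real.sqrt (∑ j, (∑ i, sgn (ε i) * v i j) ^ 2) := by
          rw [Finset.mul_sum]
      _ ≤ (B₁ / n) * (2 ^ n * Real.sqrt S) := by
          apply mul_le_mul_of_nonneg_left _ (by positivity)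
          have hjen := Real.sum_sqrt_mul_sqrt_le (Finset.univ : Finset (Fin n → Bool))
            (f := fun ε => ∑ j, (∑ i, sgn (ε i) * v i j) ^ 2)
            (g := fun _ => (1 : ℝ))
            (fun ε => Finset.sum_nonneg fun j _ => sq_nonneg _)
            (fun _ => zero_le_one)
          simp only [Real.sqrt_one, mul_one] at hjen
          have hQ : (∑ ε : Fin n → Bool, ∑ j, (∑ i, sgn (ε i) * v i j) ^ 2)
              = 2 ^ n * S := by
            rw [Finset.sum_comm]
            rw [Finset.sum_congr rfl fun j _ => sq_sum_sgn (fun i => v i j)]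
            rw [← Finset.mul_sum, hS, Finset.sum_comm]
          have hone : (∑ _ε : Fin n → Bool, (1 : ℝ)) = 2 ^ n := by
            rw [Finset.sum_const, card_eps]; simp
          rw [hQ, hone] at hjen
          calc (∑ ε : Fin n → Bool, Real.sqrt (∑ j, (∑ i, sgn (ε i) * v i j) ^ 2))
              ≤ Real.sqrt (2 ^ n * S) * Real.sqrt (2 ^ n) := hjen
            _ = 2 ^ n * Real.sqrt S := by
                rw [Real.sqrt_mul (by positivity), mul_comm (Real.sqrt (2^n)),
                  mul_assoc, ← Real.sqrt_mul (by positivity), ← sq,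
                  Real.sqrt_sq (by positivity)]
                ring
  unfold empRadW
  rw [div_le_iff₀ (by positivity : (0:ℝ) < (2:ℝ) ^ n)]
  calc (∑ ε : Fin n → Bool, sSup _) ≤ (B₁ / n) * (2 ^ n * Real.sqrt S) := hsum
    _ = (B₁ / n) * Real.sqrt S * 2 ^ n := by ring

/-- Pointwise (in the sample) bound on the expected empirical dropout Rademacher
complexity. -/
lemma pointwise_bound (d n : ℕ) (hn : 0 < n) (ρ B₁ B₂ : ℝ)
    (hρ0 : 0 ≤ ρ) (hρ1 : ρ ≤ 1) (hB₁ : 0 ≤ B₁) (hB₂ : 0 ≤ B₂)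
    (xs : Fin n → Fin d → ℝ)
    (hx : ∀ i, Real.sqrt (∑ j, xs i j ^ 2) ≤ B₂) :
    ∑ rs : Fin n → (Fin d → Bool) × (Fin d → Bool),
        (∏ i, wtPair d ρ (rs i)) * empRadW n (linW d B₁) (linFIII d) xs rs
      ≤ B₁ * B₂ * ρ / Real.sqrt n := by
  classical
  have hn' : (0 : ℝ) < n := by exact_mod_cast hn
  set P : (Fin n → (Fin d → Bool) × (Fin d → Bool)) → ℝ :=
    fun rs => ∏ i, wtPair d ρ (rs i) with hPdef
  set S : (Fin n → (Fin d → Bool) × (Fin d → Bool)) → ℝ :=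
    fun rs => ∑ i, ∑ j, (xs i j * mask ((rs i).1 j) * mask ((rs i).2 j)) ^ 2 with hSdef
  have hP0 : ∀ rs, 0 ≤ P rs := fun rs =>
    Finset.prod_nonneg fun i _ => wtPair_nonneg hρ0 hρ1 _
  have hS0 : ∀ rs, 0 ≤ S rs := fun rs => Finset.sum_nonneg fun i _ =>
    Finset.sum_nonneg fun j _ => sq_nonneg _
  have hPsum : ∑ rs, P rs = 1 := by
    rw [hPdef]
    rw [← Fintype.prod_sum
      (fun (_ : Fin n) (r : (Fin d → Bool) × (Fin d → Bool)) => wtPair d ρ r)]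
    simp [sum_wtPair]
  -- Step C : the second moment
  have hPS : (∑ rs, P rs * S rs) = ρ ^ 2 * ∑ i, ∑ j, xs i j ^ 2 := by
    have h1 : ∀ rs, P rs * S rs
        = ∑ i, ∑ j, P rs * (xs i j * mask ((rs i).1 j) * mask ((rs i).2 j)) ^ 2 := by
      intro rs
      rw [hSdef, Finset.mul_sum]
      exact Finset.sum_congr rfl fun i _ => Finset.mul_sum _ _ _
    rw [Finset.sum_congr rfl fun rs _ => h1 rs, Finset.sum_comm]
    have h2 : ∀ i : Fin n,
        (∑ rs, ∑ j, P rs * (xs i j * mask ((rs i).1 j) * mask ((rs i).2 j)) ^ 2)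
          = ∑ j, ρ ^ 2 * xs i j ^ 2 := by
      intro i
      rw [Finset.sum_comm]
      refine Finset.sum_congr rfl fun j _ => ?_
      have h3 : ∀ rs : Fin n → (Fin d → Bool) × (Fin d → Bool),
          P rs * (xs i j * mask ((rs i).1 j) * mask ((rs i).2 j)) ^ 2
            = (∏ i', wtPair d ρ (rs i'))
              * (xs i j ^ 2 * (mask ((rs i).1 j) * mask ((rs i).2 j)) ^ 2) := by
        intro rs; rw [hPdef]; ring
      rw [Finset.sum_congr rfl fun rs _ => h3 rs]
      rw [marginal (wtPair d ρ)
        (fun r => xs i j ^ 2 * (mask (r.1 j) * mask (r.2 j)) ^ 2) i sum_wtPair]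
      have h4 : ∀ r : (Fin d → Bool) × (Fin d → Bool),
          wtPair d ρ r * (xs i j ^ 2 * (mask (r.1 j) * mask (r.2 j)) ^ 2)
            = xs i j ^ 2 * (wtPair d ρ r * (mask (r.1 j) * mask (r.2 j)) ^ 2) := by
        intro r; ring
      rw [Finset.sum_congr rfl fun r _ => h4 r, ← Finset.mul_sum, moment_pair]
      ring
    rw [Finset.sum_congr rfl fun i _ => h2 i, Finset.mul_sum]
    exact Finset.sum_congr rfl fun i _ => (Finset.mul_sum _ _ _).symm
  -- bound on the sample
  have hxs : (∑ i, ∑ j, xs i j ^ 2) ≤ n * B₂ ^ 2 := by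
    have hrow : ∀ i : Fin n, (∑ j, xs i j ^ 2) ≤ B₂ ^ 2 := by
      intro i
      have h0 : 0 ≤ ∑ j, xs i j ^ 2 := Finset.sum_nonneg fun j _ => sq_nonneg _
      have := pow_le_pow_left₀ (Real.sqrt_nonneg _) (hx i) 2
      rwa [Real.sq_sqrt h0] at this
    calc (∑ i, ∑ j, xs i j ^ 2) ≤ ∑ _i : Fin n, B₂ ^ 2 :=
          Finset.sum_le_sum fun i _ => hrow i
      _ = n * B₂ ^ 2 := by simp [Finset.sum_const, Finset.card_univ]
  -- chain
  calc (∑ rs, P rs * empRadW n (linW d B₁) (linFIII d) xs rs)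
      ≤ ∑ rs, P rs * ((B₁ / n) * Real.sqrt (S rs)) :=
        Finset.sum_le_sum fun rs _ =>
          mul_le_mul_of_nonneg_left (empRad_bound d n hn B₁ hB₁ xs rs) (hP0 rs)
    _ = (B₁ / n) * ∑ rs, P rs * Real.sqrt (S rs) := by
        rw [Finset.mul_sum]; exact Finset.sum_congr rfl fun rs _ => by ring
    _ ≤ (B₁ / n) * Real.sqrt (∑ rs, P rs * S rs) := by
        apply mul_le_mul_of_nonneg_left _ (by positivity)
        have hterm : ∀ rs, P rs * Real.sqrt (S rs)
            = Real.sqrt (P rs) * Real.sqrt (P rs * S rs) := by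
          intro rs
          rw [Real.sqrt_mul (hP0 rs), ← mul_assoc, Real.mul_self_sqrt (hP0 rs)]
        rw [Finset.sum_congr rfl fun rs _ => hterm rs]
        have hjen := Real.sum_sqrt_mul_sqrt_le Finset.univ
          (f := P) (g := fun rs => P rs * S rs)
          hP0 (fun rs => mul_nonneg (hP0 rs) (hS0 rs))
        rwa [hPsum, Real.sqrt_one, one_mul] at hjen
    _ = (B₁ / n) * Real.sqrt (ρ ^ 2 * ∑ i, ∑ j, xs i j ^ 2) := by rw [hPS]
    _ ≤ (B₁ / n) * Real.sqrt (ρ ^ 2 * (n * B₂ ^ 2)) := by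
        apply mul_le_mul_of_nonneg_left _ (by positivity)
        apply Real.sqrt_le_sqrt
        apply mul_le_mul_of_nonneg_left hxs (by positivity)
    _ = B₁ * B₂ * ρ / Real.sqrt n := by
        rw [Real.sqrt_mul (sq_nonneg ρ), Real.sqrt_sq hρ0,
          Real.sqrt_mul (le_of_lt hn'), Real.sqrt_sq hB₂]
        have hsn : (0 : ℝ) < Real.sqrt n := Real.sqrt_pos.2 hn'
        have hnn : (n : ℝ) = Real.sqrt n * Real.sqrt n :=
          (Real.mul_self_sqrt (le_of_lt hn')).symm
        rw [div_mul_eq_mul_div, div_eq_div_iff hn'.ne' hsn.ne']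
        linear_combination B₁ * ρ * B₂ * Real.mul_self_sqrt (le_of_lt hn')

end AuxLemmas

/-- For the network without hidden layer, with
`W = {w : ‖w‖₂ ≤ B₁}` and inputs a.s. satisfying `‖x‖₂ ≤ B₂`, the dropout
Rademacher complexity of dropout of both units and weights satisfies
`𝔑ₙ(F_W^{(III)}) ≤ B₁ B₂ ρ/√n`. -/
theorem linear_dropout_rad_both_bound (d n : ℕ) (hn : 0 < n)
    (ρ B₁ B₂ : ℝ) (hρ0 : 0 ≤ ρ) (hρ1 : ρ ≤ 1) (hB₁ : 0 ≤ B₁) (hB₂ : 0 ≤ B₂)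
    (DX : Measure (Fin d → ℝ)) [IsProbabilityMeasure DX]
    (hsupp : ∀ᵐ x ∂DX, Real.sqrt (∑ j, x j ^ 2) ≤ B₂) :
    radC n d DX (linW d B₁) (wtPair d ρ) (linFIII d) ≤ B₁ * B₂ * ρ / Real.sqrt n := by
  classical
  have hn' : (0 : ℝ) < n := by exact_mod_cast hn
  have hC : 0 ≤ B₁ * B₂ * ρ / Real.sqrt n := by positivity
  set μ : Measure (Fin n → Fin d → ℝ) := Measure.pi fun _ => DX with hμ
  set f : (Fin n → Fin d → ℝ) → ℝ := fun xs =>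
    ∑ rs : Fin n → (Fin d → Bool) × (Fin d → Bool),
      (∏ i, wtPair d ρ (rs i)) * empRadW n (linW d B₁) (linFIII d) xs rs with hf
  have hae : ∀ᵐ xs ∂μ, ∀ i : Fin n, Real.sqrt (∑ j, xs i j ^ 2) ≤ B₂ := by
    rw [MeasureTheory.ae_all_iff]
    intro i
    exact (MeasureTheory.Measure.tendsto_eval_ae_ae (μ := fun _ : Fin n => DX) (i := i)).eventually hsupp
  have hb : ∀ᵐ xs ∂μ, f xs ≤ B₁ * B₂ * ρ / Real.sqrt n :=
    hae.mono fun xs h => pointwise_bound d n hn ρ B₁ B₂ hρ0 hρ1 hB₁ hB₂ xs h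
  have hrad : radC n d DX (linW d B₁) (wtPair d ρ) (linFIII d) = ∫ xs, f xs ∂μ := rfl
  rw [hrad]
  by_cases hI : Integrable f μ
  · have hconst : Integrable (fun _ : Fin n → Fin d → ℝ => B₁ * B₂ * ρ / Real.sqrt n) μ :=
      integrable_const _
    calc (∫ xs, f xs ∂μ)
        ≤ ∫ _xs, B₁ * B₂ * ρ / Real.sqrt n ∂μ := integral_mono_ae hI hconst hb
      _ = B₁ * B₂ * ρ / Real.sqrt n := by
          simp [integral_const, measure_univ]
  · rw [integral_undef hI]
    exact hC
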